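/- For any function φ : ℝ → ℝ such that φ'(r)/r is decreasing on (0, ∞) and φ is differentiable, for every r > 0 the identity φ(r) = inf over α > 0 of [ (φ'(α)/(2α)) · r² + φ(α) − α·φ'(α)/2 ] holds, and the infimum is attained at α = r. -/

import Mathlib

/-- Super-Gaussian majorization identity: if `φ` is differentiable on `(0,∞)` and
`r ↦ φ'(r)/r` is decreasing there, then for every `r > 0`,
`φ r` is the minimum over `α > 0` of `φ'(α)/(2α) · r² + (φ α − α φ'(α)/2)`,
attained at `α = r`. -/
theorem stmt0 (φ : ℝ → ℝ)
    (hdiff : ∀ r : ℝ, 0 < r → DifferentiableAt ℝ φ r)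
    (hdec : ∀ a b : ℝ, 0 < a → a ≤ b → deriv φ b / b ≤ deriv φ a / a)
    (r : ℝ) (hr : 0 < r) :
    IsLeast {y : ℝ | ∃ α : ℝ, 0 < α ∧
        y = deriv φ α / (2 * α) * r ^ 2 + (φ α - α * deriv φ α / 2)} (φ r) ∧
      deriv φ r / (2 * r) * r ^ 2 + (φ r - r * deriv φ r / 2) = φ r := by
  have heq : deriv φ r / (2 * r) * r ^ 2 + (φ r - r * deriv φ r / 2) = φ r := by
    field_simp
    ring
  have key : ∀ α : ℝ, 0 < α →
      φ r ≤ deriv φ α / (2 * α) * r ^ 2 + (φ α - α * deriv φ α / 2) := by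
    intro α hα
    set c := deriv φ α / α with hc
    have h1 : deriv φ α / (2 * α) * r ^ 2 + (φ α - α * deriv φ α / 2)
        = (φ α - c * α ^ 2 / 2) + c * r ^ 2 / 2 := by
      rw [hc]; field_simp; ring
    set g : ℝ → ℝ := fun t => φ t - c * t ^ 2 / 2 with hg
    have hderiv : ∀ t : ℝ, 0 < t → HasDerivAt g (deriv φ t - c * t) t := by
      intro t ht
      have h2 : HasDerivAt (fun t : ℝ => c * t ^ 2 / 2) (c * t) t := by
        have h3 : HasDerivAt (fun t : ℝ => t ^ 2) (2 * t) t := by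
          simpa using hasDerivAt_pow 2 t
        have := (h3.const_mul c).div_const 2
        rw [show c * t = c * (2 * t) / 2 by ring]
        exact this
      exact (hdiff t ht).hasDerivAt.sub h2
    have goal : g r ≤ g α := by
      rcases le_total r α with h | h
      · have mono : MonotoneOn g (Set.Icc r α) := by
          apply monotoneOn_of_deriv_nonneg (convex_Icc r α)
          · intro t ht
            exact ((hderiv t (lt_of_lt_of_le hr ht.1)).differentiableAt).continuousAt.continuousWithinAt
          · intro t ht
            rw [interior_Icc] at ht
            exact ((hderiv t (hr.trans ht.1)).differentiableAt).differentiableWithinAt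
          · intro t ht
            rw [interior_Icc] at ht
            have ht0 : 0 < t := hr.trans ht.1
            rw [(hderiv t ht0).deriv]
            have hle : c ≤ deriv φ t / t := hdec t α ht0 ht.2.le
            have : c * t ≤ deriv φ t / t * t := by nlinarith
            rw [div_mul_cancel₀ _ ht0.ne'] at this
            linarith
        exact mono (Set.left_mem_Icc.2 h) (Set.right_mem_Icc.2 h) h
      · have anti : AntitoneOn g (Set.Icc α r) := by
          apply antitoneOn_of_deriv_nonpos (convex_Icc α r)
          · intro t ht
            exact ((hderiv t (lt_of_lt_of_le hα ht.1)).differentiableAt).continuousAt.continuousWithinAt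
          · intro t ht
            rw [interior_Icc] at ht
            exact ((hderiv t (hα.trans ht.1)).differentiableAt).differentiableWithinAt
          · intro t ht
            rw [interior_Icc] at ht
            have ht0 : 0 < t := hα.trans ht.1
            rw [(hderiv t ht0).deriv]
            have hle : deriv φ t / t ≤ c := hdec α t hα ht.1.le
            have : deriv φ t / t * t ≤ c * t := by nlinarith
            rw [div_mul_cancel₀ _ ht0.ne'] at this
            linarith
        exact anti (Set.left_mem_Icc.2 h) (Set.right_mem_Icc.2 h) h
    simp only [hg] at goal
    rw [h1]
    linarith
  refine ⟨⟨⟨r, hr, heq.symm⟩, ?_⟩, heq⟩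
  rintro y ⟨α, hα, rfl⟩
  exact key α hα
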